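/- Let P̂ be an n×r real matrix with orthonormal columns that is μ-incoherent (every row satisfies ‖P̂⁽ⁱ⁾‖² ≤ μr/n), set Ψ := I − P̂P̂ᵀ, let T ⊆ {1,…,n} with |T| = s, and assume s·μ·r/n < 1. Then the matrix Ψ_TᵀΨ_T (with Ψ_T := Ψ I_T) is invertible, its smallest eigenvalue is at least 1 − s·μ·r/n, and for any l ∈ ℝⁿ, any x ∈ ℝⁿ supported on T, and x̂ := I_T (Ψ_TᵀΨ_T)⁻¹ Ψ_Tᵀ Ψ(x + l), the error satisfies ‖x̂ − x‖ ≤ ‖Ψ l‖ / (1 − s·μ·r/n). -/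

import Mathlib

open Matrix

/-- Squared Euclidean norm on a finite index type. -/
noncomputable def enormSq {ι : Type*} [Fintype ι] (v : ι → ℝ) : ℝ := ∑ i, (v i) ^ 2

/-- Euclidean norm on a finite index type. -/
noncomputable def eucEnorm {ι : Type*} [Fintype ι] (v : ι → ℝ) : ℝ :=
  Real.sqrt (∑ i, (v i) ^ 2)

/-- The `n × |T|` matrix whose columns are the columns of the `n × n`
identity matrix indexed by the entries of `T`. -/
def colSel {n : ℕ} (T : Finset (Fin n)) : Matrix (Fin n) {j : Fin n // j ∈ T} ℝ :=
  Matrix.of fun i j => if i = (j : Fin n) then 1 else 0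

lemma enormSq_nonneg {ι : Type*} [Fintype ι] (v : ι → ℝ) : 0 ≤ enormSq v :=
  Finset.sum_nonneg fun _ _ => sq_nonneg _

lemma enorm_eq {ι : Type*} [Fintype ι] (v : ι → ℝ) : eucEnorm v = Real.sqrt (enormSq v) := rfl

lemma enorm_nonneg' {ι : Type*} [Fintype ι] (v : ι → ℝ) : 0 ≤ eucEnorm v := Real.sqrt_nonneg _

lemma enorm_sq {ι : Type*} [Fintype ι] (v : ι → ℝ) : (eucEnorm v) ^ 2 = enormSq v :=
  Real.sq_sqrt (enormSq_nonneg v)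

lemma enorm_le_enorm {ι : Type*} [Fintype ι] {u w : ι → ℝ} (h : enormSq u ≤ enormSq w) :
    eucEnorm u ≤ eucEnorm w := Real.sqrt_le_sqrt h

lemma dotProduct_self_eq {ι : Type*} [Fintype ι] (v : ι → ℝ) : v ⬝ᵥ v = enormSq v := by
  simp [dotProduct, enormSq, sq]

lemma dotProduct_le_enorm_mul_enorm {ι : Type*} [Fintype ι] (u w : ι → ℝ) :
    u ⬝ᵥ w ≤ eucEnorm u * eucEnorm w := by
  have h := Finset.sum_mul_sq_le_sq_mul_sq Finset.univ u w
  calc u ⬝ᵥ w ≤ |∑ i, u i * w i| := le_abs_self _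
    _ = Real.sqrt ((∑ i, u i * w i) ^ 2) := (Real.sqrt_sq_eq_abs _).symm
    _ ≤ Real.sqrt ((∑ i, (u i) ^ 2) * (∑ i, (w i) ^ 2)) := Real.sqrt_le_sqrt h
    _ = eucEnorm u * eucEnorm w := Real.sqrt_mul (by positivity) _

lemma inv_bound {ι : Type*} [Fintype ι] {c : ℝ} (hc : 0 < c) (A : Matrix ι ι ℝ)
    (hq : ∀ v, c * enormSq v ≤ v ⬝ᵥ A *ᵥ v) {u w : ι → ℝ} (hAu : A *ᵥ u = w) :
    eucEnorm u ≤ eucEnorm w / c := by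
  have h1 : c * (eucEnorm u) ^ 2 ≤ eucEnorm u * eucEnorm w := by
    have h := hq u; rw [hAu] at h
    have h2 := dotProduct_le_enorm_mul_enorm u w
    rw [enorm_sq]; linarith
  by_cases he : eucEnorm u = 0
  · rw [he]; exact div_nonneg (enorm_nonneg' w) hc.le
  · have he' : 0 < eucEnorm u := lt_of_le_of_ne (enorm_nonneg' u) (Ne.symm he)
    rw [le_div_iff₀ hc]
    nlinarith

lemma colSel_mulVec {n : ℕ} (T : Finset (Fin n)) (z : {j : Fin n // j ∈ T} → ℝ) (i : Fin n) :
    (colSel T *ᵥ z) i = if h : i ∈ T then z ⟨i, h⟩ else 0 := by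
  rw [mulVec, dotProduct]
  split_ifs with h
  · rw [Fintype.sum_eq_single (⟨i, h⟩ : {j : Fin n // j ∈ T})]
    · simp [colSel]
    · intro j hj
      have hne : i ≠ (j : Fin n) := by
        intro hij
        exact hj (Subtype.ext hij.symm)
      simp [colSel, hne]
  · apply Finset.sum_eq_zero
    intro j _
    have : i ≠ (j : Fin n) := fun hij => h (hij ▸ j.2)
    simp [colSel, this]

lemma colSelT_mulVec {n : ℕ} (T : Finset (Fin n)) (y : Fin n → ℝ) (j : {j : Fin n // j ∈ T}) :
    ((colSel T)ᵀ *ᵥ y) j = y j := by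
  simp [mulVec, dotProduct, transpose_apply, colSel]

lemma enormSq_colSel_mulVec {n : ℕ} (T : Finset (Fin n)) (z : {j : Fin n // j ∈ T} → ℝ) :
    enormSq (colSel T *ᵥ z) = enormSq z := by
  unfold enormSq
  rw [← Finset.sum_subset (Finset.subset_univ T)
      (fun i _ hi => by rw [colSel_mulVec, dif_neg hi]; simp)]
  rw [Finset.sum_subtype T (fun x => Iff.rfl) (fun i => ((colSel T *ᵥ z) i) ^ 2)]
  apply Finset.sum_congr rfl
  intro j _
  rw [colSel_mulVec, dif_pos j.2]

lemma enormSq_colSelT_le {n : ℕ} (T : Finset (Fin n)) (y : Fin n → ℝ) :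
    enormSq ((colSel T)ᵀ *ᵥ y) ≤ enormSq y := by
  unfold enormSq
  calc ∑ j : {j : Fin n // j ∈ T}, (((colSel T)ᵀ *ᵥ y) j) ^ 2
      = ∑ j : {j : Fin n // j ∈ T}, (y ↑j) ^ 2 := by simp [colSelT_mulVec]
    _ = ∑ i ∈ T, (y i) ^ 2 :=
        (Finset.sum_subtype T (fun x => Iff.rfl) (fun i => (y i) ^ 2)).symm
    _ ≤ ∑ i, (y i) ^ 2 :=
        Finset.sum_le_sum_of_subset_of_nonneg (Finset.subset_univ T)
          (fun i _ _ => sq_nonneg _)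

set_option maxHeartbeats 1000000 in
/-- If `P̂` is μ-incoherent, `Ψ = I − P̂P̂ᵀ`, `|T| = s` and `sμr/n < 1`, then
`Ψ_TᵀΨ_T` is invertible with smallest eigenvalue at least `1 − sμr/n`
(stated via the quadratic form), and the projected least-squares estimate
`x̂ = I_T (Ψ_TᵀΨ_T)⁻¹ Ψ_Tᵀ Ψ(x + l)` of an `x` supported on `T` satisfies
`‖x̂ − x‖ ≤ ‖Ψ l‖ / (1 − sμr/n)`. -/
theorem projected_cs_error_bound {n r : ℕ}
    (Phat : Matrix (Fin n) (Fin r) ℝ) (hP : Phatᵀ * Phat = 1) (μ : ℝ)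
    (hincoh : ∀ i : Fin n, (∑ j, (Phat i j) ^ 2) ≤ μ * r / n)
    (T : Finset (Fin n)) (s : ℕ) (hT : T.card = s)
    (hs : s * μ * r / n < 1)
    (l x : Fin n → ℝ) (hx : ∀ i : Fin n, i ∉ T → x i = 0) :
    ∀ (Ψ : Matrix (Fin n) (Fin n) ℝ), Ψ = 1 - Phat * Phatᵀ →
    ∀ (ΨT : Matrix (Fin n) {j : Fin n // j ∈ T} ℝ), ΨT = Ψ * colSel T →
    IsUnit (ΨTᵀ * ΨT).det ∧
    (∀ v : {j : Fin n // j ∈ T} → ℝ,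
      (1 - s * μ * r / n) * enormSq v ≤ v ⬝ᵥ (ΨTᵀ * ΨT).mulVec v) ∧
    (∀ xhat : Fin n → ℝ,
      xhat = (colSel T).mulVec
          ((ΨTᵀ * ΨT)⁻¹.mulVec (ΨTᵀ.mulVec (Ψ.mulVec (x + l)))) →
      eucEnorm (xhat - x) ≤ eucEnorm (Ψ.mulVec l) / (1 - s * μ * r / n)) := by
  intro Ψ hΨ ΨT hΨT
  have hc : (0:ℝ) < 1 - s * μ * r / n := by linarith
  have hΨsym : Ψᵀ = Ψ := by
    rw [hΨ]; simp [Matrix.transpose_sub, Matrix.transpose_mul]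
  have hPP : (Phat * Phatᵀ) * (Phat * Phatᵀ) = Phat * Phatᵀ := by
    rw [Matrix.mul_assoc, ← Matrix.mul_assoc Phatᵀ, hP, Matrix.one_mul]
  have hΨidem : Ψ * Ψ = Ψ := by
    rw [hΨ]
    simp only [Matrix.sub_mul, Matrix.mul_sub, Matrix.one_mul, Matrix.mul_one, hPP]
    abel
  -- quadratic form bound
  have hquad : ∀ v : {j : Fin n // j ∈ T} → ℝ,
      (1 - s * μ * r / n) * enormSq v ≤ v ⬝ᵥ (ΨTᵀ * ΨT).mulVec v := by
    intro v
    set u : Fin n → ℝ := colSel T *ᵥ v with hu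
    have key : ∀ y : Fin n → ℝ, (Ψ *ᵥ y) ⬝ᵥ (Ψ *ᵥ y) = y ⬝ᵥ (Ψ *ᵥ y) := by
      intro y
      calc (Ψ *ᵥ y) ⬝ᵥ (Ψ *ᵥ y) = (y ᵥ* Ψᵀ) ⬝ᵥ (Ψ *ᵥ y) := by rw [vecMul_transpose]
        _ = y ⬝ᵥ (Ψᵀ *ᵥ (Ψ *ᵥ y)) := (dotProduct_mulVec y Ψᵀ (Ψ *ᵥ y)).symm
        _ = y ⬝ᵥ (Ψ *ᵥ y) := by rw [mulVec_mulVec, hΨsym, hΨidem]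
    have h1 : v ⬝ᵥ (ΨTᵀ * ΨT).mulVec v = u ⬝ᵥ (Ψ *ᵥ u) := by
      rw [← mulVec_mulVec, dotProduct_mulVec, vecMul_transpose, hΨT, ← mulVec_mulVec, key]
    have h2 : u ⬝ᵥ (Ψ *ᵥ u) = u ⬝ᵥ u - (Phatᵀ *ᵥ u) ⬝ᵥ (Phatᵀ *ᵥ u) := by
      rw [hΨ, Matrix.sub_mulVec, Matrix.one_mulVec, dotProduct_sub]
      congr 1
      rw [← mulVec_mulVec, dotProduct_mulVec, ← mulVec_transpose]
    have h3 : u ⬝ᵥ u = enormSq v := by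
      rw [dotProduct_self_eq, hu, enormSq_colSel_mulVec]
    have huT : ∑ i ∈ T, (u i) ^ 2 = enormSq v := by
      rw [← enormSq_colSel_mulVec T v, ← hu]
      unfold enormSq
      exact Finset.sum_subset (Finset.subset_univ T)
        (fun i _ hi => by rw [hu, colSel_mulVec, dif_neg hi]; simp)
    have hPu : enormSq (Phatᵀ *ᵥ u) ≤ (s * μ * r / n) * enormSq v := by
      have hstep : ∀ j : Fin r,
          ((Phatᵀ *ᵥ u) j) ^ 2 ≤ enormSq v * (∑ i ∈ T, (Phat i j) ^ 2) := by
        intro j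
        have h0 : (Phatᵀ *ᵥ u) j = ∑ i ∈ T, u i * Phat i j := by
          calc (Phatᵀ *ᵥ u) j = ∑ i, Phat i j * u i := by
                simp [mulVec, dotProduct, transpose_apply]
            _ = ∑ i ∈ T, Phat i j * u i :=
                (Finset.sum_subset (Finset.subset_univ T)
                  (fun i _ hi => by
                    rw [hu, colSel_mulVec, dif_neg hi, mul_zero])).symm
            _ = ∑ i ∈ T, u i * Phat i j := by simp [mul_comm]
        rw [h0, ← huT]
        exact Finset.sum_mul_sq_le_sq_mul_sq T u (fun i => Phat i j)
      calc enormSq (Phatᵀ *ᵥ u) ≤ ∑ j, enormSq v * (∑ i ∈ T, (Phat i j) ^ 2) :=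
            Finset.sum_le_sum (fun j _ => hstep j)
        _ = enormSq v * ∑ i ∈ T, (∑ j, (Phat i j) ^ 2) := by
            rw [← Finset.mul_sum]
            congr 1
            exact Finset.sum_comm
        _ ≤ enormSq v * (s * (μ * r / n)) := by
            apply mul_le_mul_of_nonneg_left _ (enormSq_nonneg v)
            calc ∑ i ∈ T, (∑ j, (Phat i j) ^ 2) ≤ ∑ _i ∈ T, (μ * r / n) :=
                  Finset.sum_le_sum (fun i _ => hincoh i)
              _ = s * (μ * r / n) := by rw [Finset.sum_const, hT, nsmul_eq_mul]
        _ = (s * μ * r / n) * enormSq v := by ring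
    rw [h1, h2, h3, dotProduct_self_eq]
    linarith
  -- positive definiteness and invertibility
  have hsym : (ΨTᵀ * ΨT).IsHermitian := by
    have : (ΨTᵀ * ΨT)ᴴ = ΨTᵀ * ΨT := by
      ext i j
      simp [conjTranspose_apply, Matrix.mul_apply, transpose_apply, mul_comm]
    exact this
  have hPD : (ΨTᵀ * ΨT).PosDef := by
    refine Matrix.PosDef.of_dotProduct_mulVec_pos hsym (fun y hy => ?_)
    have hy' : 0 < enormSq y := by
      obtain ⟨i, hi⟩ := Function.ne_iff.mp hy
      have hi' : y i ≠ 0 := by simpa using hi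
      exact Finset.sum_pos' (fun i _ => sq_nonneg _)
        ⟨i, Finset.mem_univ i, by positivity⟩
    have hst : star y = y := by funext i; simp
    rw [hst]
    calc (0:ℝ) < (1 - s * μ * r / n) * enormSq y := mul_pos hc hy'
      _ ≤ y ⬝ᵥ (ΨTᵀ * ΨT).mulVec y := hquad y
  have hdet : IsUnit (ΨTᵀ * ΨT).det := hPD.det_pos.ne'.isUnit
  refine ⟨hdet, hquad, ?_⟩
  -- error bound
  intro xhat hxhat
  set xT : {j : Fin n // j ∈ T} → ℝ := fun j => x j with hxT
  have hx_decomp : colSel T *ᵥ xT = x := by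
    funext i
    rw [colSel_mulVec]
    split_ifs with h
    · rfl
    · exact (hx i h).symm
  have hΨx : Ψ *ᵥ x = ΨT *ᵥ xT := by
    rw [← hx_decomp, mulVec_mulVec, ← hΨT]
  set w : {j : Fin n // j ∈ T} → ℝ := (colSel T)ᵀ *ᵥ (Ψ *ᵥ l) with hw
  have hwl : ΨTᵀ *ᵥ (Ψ *ᵥ l) = w := by
    rw [hw, hΨT, Matrix.transpose_mul, hΨsym, mulVec_mulVec, Matrix.mul_assoc, hΨidem, ← mulVec_mulVec]
  have hdecomp : ΨTᵀ *ᵥ (Ψ *ᵥ (x + l)) = (ΨTᵀ * ΨT) *ᵥ xT + w := by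
    rw [Matrix.mulVec_add, Matrix.mulVec_add, hΨx, mulVec_mulVec, hwl]
  have key : xhat - x = colSel T *ᵥ ((ΨTᵀ * ΨT)⁻¹ *ᵥ w) := by
    rw [hxhat, hdecomp, Matrix.mulVec_add, mulVec_mulVec,
      Matrix.nonsing_inv_mul _ hdet, Matrix.one_mulVec, Matrix.mulVec_add, hx_decomp]
    abel
  have hAu : (ΨTᵀ * ΨT) *ᵥ ((ΨTᵀ * ΨT)⁻¹ *ᵥ w) = w := by
    rw [mulVec_mulVec, Matrix.mul_nonsing_inv _ hdet, Matrix.one_mulVec]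
  have h1 : eucEnorm (xhat - x) = eucEnorm ((ΨTᵀ * ΨT)⁻¹ *ᵥ w) := by
    rw [key, enorm_eq, enorm_eq, enormSq_colSel_mulVec]
  have h2 : eucEnorm ((ΨTᵀ * ΨT)⁻¹ *ᵥ w) ≤ eucEnorm w / (1 - s * μ * r / n) :=
    inv_bound hc _ hquad hAu
  have h3 : eucEnorm w ≤ eucEnorm (Ψ *ᵥ l) := by
    rw [hw, enorm_eq, enorm_eq]
    exact Real.sqrt_le_sqrt (enormSq_colSelT_le T (Ψ *ᵥ l))
  rw [h1]
  refine h2.trans ?_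
  gcongr
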